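/- Let w ∈ ℝ^d be nonzero and x ∼ N(0, I_d). With σ the ReLU and σ' its derivative (indicator of positivity), E[x σ'(xᵀw) σ(xᵀw)] = (1/2) w. -/

import Mathlib

open MeasureTheory ProbabilityTheory Real
open scoped ENNReal NNReal

lemma pdf01 (x : ℝ) : gaussianPDFReal 0 1 x = (Real.sqrt (2*π))⁻¹ * Real.exp (-(1/2) * x^2) := by
  rw [gaussianPDFReal]
  simp only [NNReal.coe_one, mul_one, sub_zero]
  congr 1
  ring

lemma integ_pow_pdf (n : ℕ) : Integrable (fun x => x ^ n * gaussianPDFReal 0 1 x) := by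
  have hs : (-1:ℝ) < (n:ℝ) := by
    have : (0:ℝ) ≤ n := Nat.cast_nonneg n
    linarith
  have h := integrable_rpow_mul_exp_neg_mul_sq (b := (1/2:ℝ)) one_half_pos (s := (n:ℝ)) hs
  have h2 := h.const_mul ((Real.sqrt (2*π))⁻¹)
  refine h2.congr ?_
  filter_upwards with x
  rw [pdf01, Real.rpow_natCast]
  ring

lemma nu_eq : gaussianReal 0 1
    = volume.withDensity (fun x => ((gaussianPDFReal 0 1 x).toNNReal : ℝ≥0∞)) := by
  rw [gaussianReal_of_var_ne_zero 0 one_ne_zero]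
  rfl

lemma integrable_nu_iff (g : ℝ → ℝ) : Integrable g (gaussianReal 0 1)
    ↔ Integrable (fun x => gaussianPDFReal 0 1 x * g x) volume := by
  rw [nu_eq, integrable_withDensity_iff_integrable_smul
    ((measurable_gaussianPDFReal 0 1).real_toNNReal)]
  refine integrable_congr ?_
  filter_upwards with x
  simp [NNReal.smul_def, Real.coe_toNNReal _ (gaussianPDFReal_nonneg 0 1 x)]

lemma integral_nu (g : ℝ → ℝ) : ∫ x, g x ∂(gaussianReal 0 1)
    = ∫ x, gaussianPDFReal 0 1 x * g x := by
  rw [nu_eq, integral_withDensity_eq_integral_smul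
    ((measurable_gaussianPDFReal 0 1).real_toNNReal)]
  refine integral_congr_ae ?_
  filter_upwards with x
  simp [NNReal.smul_def, Real.coe_toNNReal _ (gaussianPDFReal_nonneg 0 1 x)]

lemma integ_pow_nu (n : ℕ) : Integrable (fun x => x ^ n) (gaussianReal 0 1) := by
  rw [integrable_nu_iff]
  exact (integ_pow_pdf n).congr (by filter_upwards with x; ring)

lemma nu_map_neg : (gaussianReal 0 1).map (fun x : ℝ => -x) = gaussianReal 0 1 := by
  have h := gaussianReal_map_const_mul (μ := 0) (v := 1) (-1 : ℝ)
  simp only [neg_mul, one_mul, mul_zero] at h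
  convert h using 2
  norm_num

lemma moment_one_nu : ∫ x, x ∂(gaussianReal 0 1) = 0 := by
  have h1 : Integrable (fun x : ℝ => x) (gaussianReal 0 1) := by
    simpa using integ_pow_nu 1
  have h2 : ∫ x, x ∂(gaussianReal 0 1) = ∫ x, (-x) ∂(gaussianReal 0 1) := by
    conv_lhs => rw [← nu_map_neg]
    rw [integral_map measurable_neg.aemeasurable (by rw [nu_map_neg]; exact h1.1)]
  rw [integral_neg] at h2
  linarith

lemma tendsto_aux : Filter.Tendsto (fun x : ℝ => -x * Real.exp (-(1/2) * x^2))
    Filter.atTop (nhds 0) := by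
  have h := rpow_mul_exp_neg_mul_sq_isLittleO_exp_neg (b := (1/2:ℝ)) one_half_pos 1
  have hcomp : Filter.Tendsto (fun x : ℝ => Real.exp (-(1/2) * x)) Filter.atTop (nhds 0) := by
    have := Real.tendsto_exp_neg_atTop_nhds_zero.comp
      (Filter.Tendsto.const_mul_atTop one_half_pos Filter.tendsto_id)
    simpa [Function.comp_def, neg_mul, one_div] using this
  have h2 := h.trans_tendsto hcomp
  simp only [Real.rpow_one] at h2
  simpa using h2.neg

lemma integ_sq_exp : Integrable (fun x : ℝ => x^2 * Real.exp (-(1/2) * x^2)) := by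
  have h := integrable_rpow_mul_exp_neg_mul_sq (b := (1/2:ℝ)) one_half_pos
    (s := (2:ℝ)) (by norm_num)
  refine h.congr ?_
  filter_upwards with x
  rw [show ((2:ℝ)) = ((2:ℕ):ℝ) by norm_num, Real.rpow_natCast]

lemma key_int : ∫ x : ℝ, x^2 * Real.exp (-(1/2) * x^2) = Real.sqrt (2*π) := by
  set f : ℝ → ℝ := fun x => -x * Real.exp (-(1/2)*x^2) with hf
  have hderiv : ∀ x : ℝ, HasDerivAt f
      (x^2 * Real.exp (-(1/2)*x^2) - Real.exp (-(1/2)*x^2)) x := by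
    intro x
    have h1 : HasDerivAt (fun x : ℝ => -(1/2) * x^2) (-(1/2) * (2 * x^1)) x :=
      (hasDerivAt_pow 2 x).const_mul _
    have h2 := h1.exp
    have h3 := ((hasDerivAt_id x).neg.mul h2)
    refine h3.congr_deriv ?_
    simp only [Pi.neg_apply, id_eq]
    ring
  have hexp : Integrable (fun x : ℝ => Real.exp (-(1/2) * x^2)) :=
    integrable_exp_neg_mul_sq one_half_pos
  have hint : Integrable (fun x : ℝ =>
      x^2 * Real.exp (-(1/2)*x^2) - Real.exp (-(1/2)*x^2)) := integ_sq_exp.sub hexp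
  have htop : Filter.Tendsto f Filter.atTop (nhds 0) := tendsto_aux
  have hbot : Filter.Tendsto f Filter.atBot (nhds 0) := by
    have t : Filter.Tendsto (f ∘ (fun x : ℝ => -x)) Filter.atTop (nhds 0) := by
      have := tendsto_aux.neg
      simp only [neg_zero] at this
      refine this.congr' ?_
      filter_upwards with x
      simp [hf]
    have := t.comp Filter.tendsto_neg_atBot_atTop
    refine this.congr' ?_
    filter_upwards with x
    simp [Function.comp]
  have h0 := MeasureTheory.integral_of_hasDerivAt_of_tendsto hderiv hint hbot htop
  rw [MeasureTheory.integral_sub integ_sq_exp hexp, sub_zero] at h0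
  have hg : ∫ x : ℝ, Real.exp (-(1/2) * x^2) = Real.sqrt (2*π) := by
    rw [integral_gaussian (1/2), show (π/(1/2) : ℝ) = 2*π by ring]
  linarith [h0, hg]

lemma moment_two_nu : ∫ x, x^2 ∂(gaussianReal 0 1) = 1 := by
  rw [integral_nu]
  have : ∫ x, gaussianPDFReal 0 1 x * x^2
      = ∫ x, (Real.sqrt (2*π))⁻¹ * (x^2 * Real.exp (-(1/2) * x^2)) := by
    congr 1; funext x; rw [pdf01]; ring
  rw [this, MeasureTheory.integral_const_mul, key_int,
    inv_mul_cancel₀ (by positivity : Real.sqrt (2*π) ≠ 0)]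

lemma pi_prod_integrable {d : ℕ} (g : Fin d → ℝ → ℝ)
    (hg : ∀ k, Integrable (g k) (gaussianReal 0 1)) :
    Integrable (fun y : Fin d → ℝ => ∏ k, g k (y k))
      (Measure.pi fun _ => gaussianReal 0 1) := by
  letI : MeasureSpace ℝ := ⟨gaussianReal 0 1⟩
  haveI : SigmaFinite (volume : Measure ℝ) :=
    (inferInstance : SigmaFinite (gaussianReal 0 1))
  exact MeasureTheory.Integrable.fintype_prod (𝕜 := ℝ) hg

lemma pi_prod_integral {d : ℕ} (g : Fin d → ℝ → ℝ) :
    ∫ y : Fin d → ℝ, ∏ k, g k (y k) ∂(Measure.pi fun _ => gaussianReal 0 1)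
      = ∏ k, ∫ x, g k x ∂(gaussianReal 0 1) := by
  letI : MeasureSpace ℝ := ⟨gaussianReal 0 1⟩
  haveI : SigmaFinite (volume : Measure ℝ) :=
    (inferInstance : SigmaFinite (gaussianReal 0 1))
  exact MeasureTheory.integral_fintype_prod_eq_prod (fun k => g k)

noncomputable def hfun {d : ℕ} (i j k : Fin d) : ℝ → ℝ :=
  fun t => (if k = i then t else 1) * (if k = j then t else 1)

lemma hprod {d : ℕ} (i j : Fin d) (y : Fin d → ℝ) :
    (∏ k, hfun i j k (y k)) = y i * y j := by
  simp only [hfun, Finset.prod_mul_distrib]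
  simp [Finset.prod_ite_eq']

lemma hint {d : ℕ} (i j k : Fin d) : Integrable (hfun i j k) (gaussianReal 0 1) := by
  have h2 : Integrable (fun t : ℝ => t^2) (gaussianReal 0 1) := integ_pow_nu 2
  have h1' : Integrable (fun t : ℝ => t) (gaussianReal 0 1) := by
    simpa using integ_pow_nu 1
  by_cases hi : k = i <;> by_cases hj : k = j
  · refine h2.congr ?_
    filter_upwards with t
    simp only [hfun, if_pos hi, if_pos hj]
    ring
  · refine h1'.congr ?_
    filter_upwards with t
    simp only [hfun, if_pos hi, if_neg hj, mul_one]
  · refine h1'.congr ?_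
    filter_upwards with t
    simp only [hfun, if_neg hi, if_pos hj, one_mul]
  · refine (integrable_const (1:ℝ)).congr ?_
    filter_upwards with t
    simp only [hfun, if_neg hi, if_neg hj, one_mul]

lemma pi_integrable_mul {d : ℕ} (i j : Fin d) :
    Integrable (fun y : Fin d → ℝ => y i * y j)
      (Measure.pi fun _ => gaussianReal 0 1) := by
  have := pi_prod_integrable (fun k => hfun i j k) (fun k => hint i j k)
  refine this.congr ?_
  filter_upwards with y
  exact hprod i j y

lemma pi_integral_mul {d : ℕ} (i j : Fin d) :
    ∫ y : Fin d → ℝ, y i * y j ∂(Measure.pi fun _ => gaussianReal 0 1)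
      = if i = j then 1 else 0 := by
  have h1 : ∫ y : Fin d → ℝ, y i * y j ∂(Measure.pi fun _ => gaussianReal 0 1)
      = ∏ k, ∫ x, hfun i j k x ∂(gaussianReal 0 1) := by
    rw [← pi_prod_integral]
    congr 1; funext y; exact (hprod i j y).symm
  rw [h1]
  by_cases hij : i = j
  · subst hij
    simp only [if_pos rfl]
    rw [Finset.prod_eq_single i]
    · have he : hfun i i i = fun t : ℝ => t^2 := by
        funext t; simp [hfun]; ring
      rw [he, moment_two_nu]
      simp
    · intro k _ hk
      have he : hfun i i k = fun _ : ℝ => (1:ℝ) := by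
        funext t; simp only [hfun, if_neg hk, one_mul]
      rw [he]
      simp
    · simp
  · simp only [if_neg hij]
    refine Finset.prod_eq_zero (Finset.mem_univ i) ?_
    have he : hfun i j i = fun t : ℝ => t := by
      funext t
      simp [hfun, hij]
    rw [he, moment_one_nu]

section Multi

variable {d : ℕ}

local notation "E" => EuclideanSpace ℝ (Fin d)
local notation "piG" => (Measure.pi fun _ : Fin d => gaussianReal 0 1)

def negE (α : Type*) [SubtractionMonoid α] [MeasurableSpace α] [MeasurableNeg α] :
    α ≃ᵐ α := ⟨Equiv.neg α, measurable_neg, measurable_neg⟩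

lemma pi_map_neg : Measure.map (fun y : Fin d → ℝ => -y) piG = piG := by
  have hc : ∀ i : Fin d, MeasurePreserving (fun t : ℝ => -t)
      (gaussianReal 0 1) (gaussianReal 0 1) := fun _ => ⟨measurable_neg, nu_map_neg⟩
  exact (measurePreserving_pi _ _ hc).map_eq

lemma pi_map_negE : Measure.map (⇑(negE (Fin d → ℝ))) piG = piG := pi_map_neg

lemma norm_sq_integrable :
    Integrable (fun x : E => ‖x‖^2)
      (Measure.map (⇑(MeasurableEquiv.toLp 2 (Fin d → ℝ))) piG) := by
  rw [integrable_map_equiv]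
  have h : ∀ y : Fin d → ℝ,
      ‖((MeasurableEquiv.toLp 2 (Fin d → ℝ)) y : E)‖^2 = ∑ i, (y i)^2 := by
    intro y
    rw [EuclideanSpace.norm_eq, Real.sq_sqrt (by positivity)]
    refine Finset.sum_congr rfl fun i _ => ?_
    rw [Real.norm_eq_abs, sq_abs]
    rfl
  refine (integrable_finset_sum Finset.univ
    (fun i _ => ?_)).congr (by filter_upwards with y; exact (h y).symm)
  simpa [sq] using pi_integrable_mul i i

lemma cont1 (w : EuclideanSpace ℝ (Fin d)) :
    Continuous (fun x : E => ((inner ℝ x w : ℝ)) • x) :=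
  (continuous_id.inner (𝕜 := ℝ) continuous_const).smul continuous_id

lemma cont2 (w : EuclideanSpace ℝ (Fin d)) :
    Continuous (fun x : E => |(inner ℝ x w : ℝ)| • x) :=
  (continuous_id.inner (𝕜 := ℝ) continuous_const).abs.smul continuous_id

lemma integrable_F1 (w : EuclideanSpace ℝ (Fin d)) :
    Integrable (fun x : E => ((inner ℝ x w : ℝ)) • x)
      (Measure.map (⇑(MeasurableEquiv.toLp 2 (Fin d → ℝ))) piG) := by
  refine Integrable.mono' ((norm_sq_integrable).const_mul ‖w‖)
    (cont1 w).aestronglyMeasurable ?_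
  filter_upwards with x
  rw [norm_smul, Real.norm_eq_abs]
  calc |(inner ℝ x w : ℝ)| * ‖x‖ ≤ (‖x‖ * ‖w‖) * ‖x‖ :=
        mul_le_mul_of_nonneg_right (abs_real_inner_le_norm x w) (norm_nonneg x)
    _ = ‖w‖ * ‖x‖^2 := by ring

lemma integrable_F2 (w : EuclideanSpace ℝ (Fin d)) :
    Integrable (fun x : E => |(inner ℝ x w : ℝ)| • x)
      (Measure.map (⇑(MeasurableEquiv.toLp 2 (Fin d → ℝ))) piG) := by
  refine Integrable.mono' ((norm_sq_integrable).const_mul ‖w‖)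
    (cont2 w).aestronglyMeasurable ?_
  filter_upwards with x
  rw [norm_smul, Real.norm_eq_abs, abs_abs]
  calc |(inner ℝ x w : ℝ)| * ‖x‖ ≤ (‖x‖ * ‖w‖) * ‖x‖ :=
        mul_le_mul_of_nonneg_right (abs_real_inner_le_norm x w) (norm_nonneg x)
    _ = ‖w‖ * ‖x‖^2 := by ring

lemma integral_F2_zero (w : EuclideanSpace ℝ (Fin d)) :
    ∫ x, |(inner ℝ x w : ℝ)| • x
      ∂(Measure.map (⇑(MeasurableEquiv.toLp 2 (Fin d → ℝ))) piG) = 0 := by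
  rw [integral_map_equiv]
  set G : (Fin d → ℝ) → EuclideanSpace ℝ (Fin d) := fun y =>
    |(inner ℝ ((MeasurableEquiv.toLp 2 (Fin d → ℝ)) y : E) w : ℝ)| •
      ((MeasurableEquiv.toLp 2 (Fin d → ℝ)) y : E) with hG
  show ∫ y, G y ∂piG = 0
  have h2 : ∫ y, G y ∂piG = ∫ y, G (negE (Fin d → ℝ) y) ∂piG := by
    conv_lhs => rw [← pi_map_negE]
    exact integral_map_equiv (negE (Fin d → ℝ)) G
  have h3 : ∀ y, G (negE (Fin d → ℝ) y) = - G y := by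
    intro y
    have hy : ((MeasurableEquiv.toLp 2 (Fin d → ℝ)) (negE (Fin d → ℝ) y) : E)
        = -((MeasurableEquiv.toLp 2 (Fin d → ℝ)) y : E) := rfl
    rw [hG]
    simp only [hy, inner_neg_left, abs_neg, smul_neg]
  simp only [h3] at h2
  rw [integral_neg] at h2
  have h5 : ((2:ℝ)) • ∫ y, G y ∂piG = 0 := by
    rw [two_smul]
    nth_rewrite 2 [h2]
    simp
  rcases smul_eq_zero.1 h5 with h | h
  · norm_num at h
  · exact h

lemma integral_F1_eq (w : EuclideanSpace ℝ (Fin d)) :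
    ∫ x, ((inner ℝ x w : ℝ)) • x
      ∂(Measure.map (⇑(MeasurableEquiv.toLp 2 (Fin d → ℝ))) piG) = w := by
  refine PiLp.ext fun i => ?_
  have hproj := (EuclideanSpace.proj (𝕜 := ℝ) i).integral_comp_comm (integrable_F1 w)
  have hl : ∀ x : E, (EuclideanSpace.proj (𝕜 := ℝ) i) (((inner ℝ x w : ℝ)) • x)
      = (inner ℝ x w : ℝ) * x i := by
    intro x; simp [smul_eq_mul]
  simp only [hl] at hproj
  have hcoord : (∫ x, ((inner ℝ x w : ℝ)) • x
      ∂(Measure.map (⇑(MeasurableEquiv.toLp 2 (Fin d → ℝ))) piG)) i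
      = ∫ x, (inner ℝ x w : ℝ) * x i
          ∂(Measure.map (⇑(MeasurableEquiv.toLp 2 (Fin d → ℝ))) piG) := by
    rw [hproj]
    rfl
  rw [hcoord, integral_map_equiv]
  have hin : ∀ y : Fin d → ℝ,
      (inner ℝ ((MeasurableEquiv.toLp 2 (Fin d → ℝ)) y : E) w : ℝ)
        * ((MeasurableEquiv.toLp 2 (Fin d → ℝ)) y : E) i
      = ∑ j, w j * (y j * y i) := by
    intro y
    rw [PiLp.inner_apply, Finset.sum_mul]
    refine Finset.sum_congr rfl fun j _ => ?_
    simp only [RCLike.inner_apply, conj_trivial]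
    show w j * ((MeasurableEquiv.toLp 2 (Fin d → ℝ)) y : E) j
        * ((MeasurableEquiv.toLp 2 (Fin d → ℝ)) y : E) i = w j * (y j * y i)
    have e1 : ((MeasurableEquiv.toLp 2 (Fin d → ℝ)) y : E) j = y j := rfl
    have e2 : ((MeasurableEquiv.toLp 2 (Fin d → ℝ)) y : E) i = y i := rfl
    rw [e1, e2]; ring
  simp only [hin]
  rw [integral_finset_sum Finset.univ
    (fun j _ => (pi_integrable_mul j i).const_mul (w j))]
  have hj : ∀ j, ∫ y : Fin d → ℝ, w j * (y j * y i) ∂piG = if j = i then w j else 0 := by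
    intro j
    rw [integral_const_mul, pi_integral_mul]
    by_cases h : j = i <;> simp [h]
  simp only [hj]
  simp [Finset.sum_ite_eq']

end Multi

/-- `E_{x ~ N(0, I_d)}[x σ'(xᵀw) σ(xᵀw)] = w / 2` for the ReLU `σ`. -/
theorem gaussian_relu_selfcorrelation_gradient {d : ℕ}
    (w : EuclideanSpace ℝ (Fin d)) (hw : w ≠ 0) :
    letI μ : Measure (EuclideanSpace ℝ (Fin d)) :=
      (Measure.pi fun _ : Fin d => ProbabilityTheory.gaussianReal 0 1).map
        (MeasurableEquiv.toLp 2 (Fin d → ℝ))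
    (∫ x, ((if 0 < (inner ℝ x w : ℝ) then (1 : ℝ) else 0) * max 0 (inner ℝ x w : ℝ)) • x ∂μ)
      = (1 / 2 : ℝ) • w := by
  have hptw : ∀ x : EuclideanSpace ℝ (Fin d),
      ((if 0 < (inner ℝ x w : ℝ) then (1:ℝ) else 0) * max 0 (inner ℝ x w : ℝ)) • x
        = (1/2 : ℝ) • (((inner ℝ x w : ℝ)) • x + |(inner ℝ x w : ℝ)| • x) := by
    intro x
    rw [← add_smul, smul_smul]
    by_cases ht : 0 < (inner ℝ x w : ℝ)
    · rw [if_pos ht, max_eq_right ht.le, abs_of_pos ht]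
      congr 1
      ring
    · rw [if_neg ht, max_eq_left (not_lt.1 ht), abs_of_nonpos (not_lt.1 ht)]
      rw [zero_mul, zero_smul]
      rw [show (inner ℝ x w : ℝ) + -(inner ℝ x w : ℝ) = 0 by ring, mul_zero, zero_smul]
  show (∫ x, ((if 0 < (inner ℝ x w : ℝ) then (1 : ℝ) else 0) * max 0 (inner ℝ x w : ℝ)) • x
      ∂(Measure.map (⇑(MeasurableEquiv.toLp 2 (Fin d → ℝ)))
        (Measure.pi fun _ : Fin d => gaussianReal 0 1)))
      = (1 / 2 : ℝ) • w
  simp only [hptw]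
  rw [integral_smul, integral_add (integrable_F1 w) (integrable_F2 w),
    integral_F1_eq w, integral_F2_zero w, add_zero]
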